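/- Let q ≥ 1 and X = Fin q ⊕ Fin q. Then for every pairing β of X and every transverse pairing τ of X, b_R(β) ≤ |τ∘β|. -/

import Mathlib

/-- Number of cycles (orbits of the generated cyclic group, fixed points included). -/
noncomputable def permCycles {X : Type*} (σ : Equiv.Perm X) : ℕ :=
  Nat.card (MulAction.orbitRel.Quotient (Subgroup.zpowers σ) X)

/-- The length `|σ| = card X - #σ` of a permutation. -/
noncomputable def permLength {X : Type*} (σ : Equiv.Perm X) : ℕ :=
  Nat.card X - permCycles σ

/-- A pairing of `X` is a fixed-point-free involution of `X`. -/
def IsPairing {X : Type*} (α : Equiv.Perm X) : Prop :=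
  α * α = 1 ∧ ∀ x, α x ≠ x

/-- A pairing of `Fin q ⊕ Fin q` is transverse if it sends the L side to the R side. -/
def IsTransverse {q : ℕ} (τ : Equiv.Perm (Fin q ⊕ Fin q)) : Prop :=
  ∀ i : Fin q, (τ (Sum.inl i)).isRight

/-- `b_R(β)`: the number of R-side elements paired to R-side elements (twice the
number of bumps of `β`). -/
def bR {q : ℕ} (β : Equiv.Perm (Fin q ⊕ Fin q)) : ℕ :=
  (Finset.univ.filter fun i : Fin q => (β (Sum.inr i)).isRight).card

theorem stmt5 (q : ℕ) (hq : 1 ≤ q) (β τ : Equiv.Perm (Fin q ⊕ Fin q))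
    (hβ : IsPairing β) (hτ : IsPairing τ) (hτt : IsTransverse τ) :
    bR β ≤ permLength (τ * β) := by
  classical
  -- τ is an involution
  have hτ2 : ∀ x, τ (τ x) = x := fun x => by
    have := Equiv.ext_iff.mp hτ.1 x
    simpa [Equiv.Perm.mul_apply] using this
  -- τ sends the L side into the R side, explicitly
  have hfex : ∀ i : Fin q, ∃ j, τ (Sum.inl i) = Sum.inr j := by
    intro i
    cases h : τ (Sum.inl i) with
    | inl a => have := hτt i; rw [h] at this; simp at this
    | inr b => exact ⟨b, rfl⟩
  choose f hfspec using hfex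
  have hfinj : Function.Injective f := by
    intro i i' h
    have : τ (Sum.inl i) = τ (Sum.inl i') := by rw [hfspec, hfspec, h]
    simpa using τ.injective this
  have hfsurj : Function.Surjective f := Finite.injective_iff_surjective.mp hfinj
  -- hence τ sends the R side to the L side
  have hτR : ∀ j : Fin q, ∃ i, τ (Sum.inr j) = Sum.inl i := by
    intro j
    obtain ⟨i, hi⟩ := hfsurj j
    exact ⟨i, by rw [← hi, ← hfspec i, hτ2]⟩
  set σ := τ * β with hσdef
  have hσL : ∀ x, (β x).isRight → (σ x).isLeft := by
    intro x hx
    cases h : β x with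
    | inl a => rw [h] at hx; simp at hx
    | inr b =>
      obtain ⟨i, hi⟩ := hτR b
      simp [hσdef, Equiv.Perm.mul_apply, h, hi]
  -- the bad set S
  set S : Finset (Fin q ⊕ Fin q) :=
    Finset.univ.filter (fun x => x.isRight ∧ (β x).isRight) with hSdef
  have hScard : S.card = bR β := by
    rw [bR, hSdef]
    rw [show Finset.univ.filter (fun x : Fin q ⊕ Fin q => x.isRight ∧ (β x).isRight)
        = (Finset.univ.filter fun i : Fin q => (β (Sum.inr i)).isRight).image Sum.inr from ?_]
    · rw [Finset.card_image_of_injective _ Sum.inr_injective]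
    · ext x
      cases x <;> simp
  -- orbit quotient
  have hmk : ∀ x : Fin q ⊕ Fin q,
      (Quotient.mk'' (σ x) :
        MulAction.orbitRel.Quotient (Subgroup.zpowers σ) (Fin q ⊕ Fin q))
        = Quotient.mk'' x := by
    intro x
    apply Quotient.sound'
    exact ⟨⟨σ, Subgroup.mem_zpowers σ⟩, rfl⟩
  set Q := MulAction.orbitRel.Quotient (Subgroup.zpowers σ) (Fin q ⊕ Fin q) with hQdef
  let g : Q → Fin q ⊕ Fin q := fun c =>
    if ((Quotient.out c).isRight && (β (Quotient.out c)).isRight) = true then σ (Quotient.out c) else (Quotient.out c)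
  have hgmk : ∀ c : Q, (Quotient.mk'' (g c) : Q) = c := by
    intro c
    by_cases h : ((Quotient.out c).isRight && (β (Quotient.out c)).isRight) = true
    · simp only [g, if_pos h]
      rw [hmk]
      exact Quotient.out_eq' c
    · simp only [g, if_neg h]
      exact Quotient.out_eq' c
  have hgS : ∀ c : Q, g c ∉ S := by
    intro c hc
    rw [hSdef, Finset.mem_filter] at hc
    by_cases h : ((Quotient.out c).isRight && (β (Quotient.out c)).isRight) = true
    · have hb : (β (Quotient.out c)).isRight = true := (by simp at h; exact h.2)
      have hL := hσL (Quotient.out c) hb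
      have hg : g c = σ (Quotient.out c) := by simp only [g, if_pos h]
      rw [hg] at hc
      cases hs : σ (Quotient.out c) <;> simp_all
    · have hg : g c = (Quotient.out c) := by simp only [g, if_neg h]
      rw [hg] at hc
      simp_all
  have hginj : Function.Injective g := fun c c' h => by
    rw [← hgmk c, ← hgmk c', h]
  have hcard : permCycles σ ≤ (Sᶜ : Finset (Fin q ⊕ Fin q)).card := by
    have hinj2 : Function.Injective
        (fun c : Q => (⟨g c, by simp [Finset.mem_compl, hgS c]⟩ :
          ↥(Sᶜ : Finset (Fin q ⊕ Fin q)))) := by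
      intro c c' h
      exact hginj (congrArg Subtype.val h)
    calc permCycles σ = Nat.card Q := rfl
      _ ≤ Nat.card ↥(Sᶜ : Finset (Fin q ⊕ Fin q)) :=
          Nat.card_le_card_of_injective _ hinj2
      _ = (Sᶜ : Finset (Fin q ⊕ Fin q)).card := Nat.card_eq_finsetCard _
  have hcompl : (Sᶜ : Finset (Fin q ⊕ Fin q)).card = (q + q) - bR β := by
    rw [Finset.card_compl, hScard]
    congr 1
    simp
  have hbR : bR β ≤ q := by
    rw [bR]
    exact (Finset.card_filter_le _ _).trans (by simp)
  have hlen : permLength σ = (q + q) - permCycles σ := by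
    rw [permLength]
    congr 1
    simp [Nat.card_eq_fintype_card]
  omega
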